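/- Let n = 2r+1 ≥ 5 be odd and let G be the cycle graph on vertices {1,…,n} with edges (i,i+1) for 1 ≤ i ≤ n−1 together with (n,1). Partition the edges as E_1 = {(1,2),(3,4),…,(2r−1,2r)}, E_3 = {(2r+1,1)}, and E_2 = E ∖ (E_1 ∪ E_3). If a sequence of matchings (M_1,…,M_k) with M_i ∩ M_{i+1} = ∅ for all 1 ≤ i < k solves the instance (G,C), then there exists an (E_1,E_3,E_2,E_3)-alternating sequence of matchings of length at most 2k+1 — meaning the matchings in positions 4j+1 are subsets of E_1, those in positions 4j+3 are subsets of E_2, and those in even positions are subsets of E_3 — that also solves (G,C). -/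

import Mathlib

/-- A matching of the graph `G`, encoded as an involution of the vertex set that
moves vertices only along edges of `G`. -/
def IsMatchingPerm {V : Type*} (G : SimpleGraph V) (m : V → V) : Prop :=
  Function.Involutive m ∧ ∀ v, m v = v ∨ G.Adj v (m v)

/-- The configuration obtained from `C` by applying the sequence of matchings
`ms = [M₁, …, M_k]` (with `M₁` applied first):  `M_k ⋯ M₁ C = C ∘ m₁ ∘ ⋯ ∘ m_k`,
where `(M C)(v) = C (m v)`. -/
def routeSeq {V : Type*} (C : V → V) (ms : List (V → V)) : V → V :=
  C ∘ ms.foldr (· ∘ ·) id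

/-- The sequence of matchings `ms = (M₁, …, M_k)` solves the instance `(G, C)`,
i.e. `M_k ⋯ M₁ C = Id`. -/
def Solves {V : Type*} (G : SimpleGraph V) (C : V → V) (ms : List (V → V)) : Prop :=
  (∀ m ∈ ms, IsMatchingPerm G m) ∧ routeSeq C ms = id

/-- The cycle graph on vertices `{0, …, n-1}` (representing `{1, …, n}`),
with edges `(i, i+1)` for `i < n-1` together with `(n-1, 0)`. -/
def cycleGraph (n : ℕ) : SimpleGraph (Fin n) :=
  SimpleGraph.fromRel fun i j => (i.val + 1) % n = j.val

/-- `m` is a matching contained in `E₁ = {(1,2), (3,4), …, (2r-1, 2r)}` (1-indexed;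
0-indexed the left endpoints are the even numbers `0, 2, …, 2r-2 = n-3`). -/
def SubE1 (n : ℕ) (m : Fin n → Fin n) : Prop :=
  Function.Involutive m ∧ ∀ v : Fin n, m v = v ∨
    (v.val % 2 = 0 ∧ (m v).val = v.val + 1) ∨ ((m v).val % 2 = 0 ∧ v.val = (m v).val + 1)

/-- `m` is a matching contained in `E₂ = E ∖ (E₁ ∪ E₃) = {(2,3), (4,5), …, (2r, 2r+1)}`
(1-indexed; 0-indexed the left endpoints are odd). -/
def SubE2 (n : ℕ) (m : Fin n → Fin n) : Prop :=
  Function.Involutive m ∧ ∀ v : Fin n, m v = v ∨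
    (v.val % 2 = 1 ∧ (m v).val = v.val + 1) ∨ ((m v).val % 2 = 1 ∧ v.val = (m v).val + 1)

/-- `m` is a matching contained in `E₃ = {(2r+1, 1)}`, the wrap edge (0-indexed
`(n-1, 0)`). -/
def SubE3 (n : ℕ) (m : Fin n → Fin n) : Prop :=
  Function.Involutive m ∧ ∀ v : Fin n, m v = v ∨
    (v.val = n - 1 ∧ (m v).val = 0) ∨ (v.val = 0 ∧ (m v).val = n - 1)


section Stmt14Aux

variable {n : ℕ}

/-- edge predicate for E1 (0-indexed: (v,v+1) with v even) -/
def inE1 (n : ℕ) (v w : Fin n) : Prop :=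
  (v.val % 2 = 0 ∧ w.val = v.val + 1) ∨ (w.val % 2 = 0 ∧ v.val = w.val + 1)

def inE2 (n : ℕ) (v w : Fin n) : Prop :=
  (v.val % 2 = 1 ∧ w.val = v.val + 1) ∨ (w.val % 2 = 1 ∧ v.val = w.val + 1)

def inE3 (n : ℕ) (v w : Fin n) : Prop :=
  (v.val = n - 1 ∧ w.val = 0) ∨ (v.val = 0 ∧ w.val = n - 1)

open Classical in
/-- the part of the matching `m` lying along edges satisfying `e` -/
noncomputable def part (e : Fin n → Fin n → Prop) (m : Fin n → Fin n) : Fin n → Fin n :=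
  fun v => if e v (m v) then m v else v

lemma part_app {e : Fin n → Fin n → Prop} {m : Fin n → Fin n} {v : Fin n}
    (h : e v (m v)) : part e m v = m v := if_pos h

lemma part_fix {e : Fin n → Fin n → Prop} {m : Fin n → Fin n} {v : Fin n}
    (h : ¬ e v (m v)) : part e m v = v := if_neg h

noncomputable def P1 (n : ℕ) (m : Fin n → Fin n) : Fin n → Fin n := part (inE1 n) m
noncomputable def P2 (n : ℕ) (m : Fin n → Fin n) : Fin n → Fin n := part (inE2 n) m
noncomputable def P3 (n : ℕ) (m : Fin n → Fin n) : Fin n → Fin n := part (inE3 n) m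

noncomputable def Pf (n : ℕ) (b : Bool) (m : Fin n → Fin n) : Fin n → Fin n :=
  if b then P1 n m else P2 n m

def SubF (n : ℕ) (b : Bool) (m : Fin n → Fin n) : Prop :=
  if b then SubE1 n m else SubE2 n m

/- symmetry -/
lemma inE1_symm {v w : Fin n} (h : inE1 n v w) : inE1 n w v := h.symm
lemma inE2_symm {v w : Fin n} (h : inE2 n v w) : inE2 n w v := h.symm
lemma inE3_symm {v w : Fin n} (h : inE3 n v w) : inE3 n w v := by unfold inE3 at *; tauto

/- irreflexivity -/
lemma inE1_ne {v w : Fin n} (h : inE1 n v w) : v ≠ w := by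
  intro he; subst he; unfold inE1 at h; omega
lemma inE2_ne {v w : Fin n} (h : inE2 n v w) : v ≠ w := by
  intro he; subst he; unfold inE2 at h; omega
lemma inE3_ne (h5 : 5 ≤ n) {v w : Fin n} (h : inE3 n v w) : v ≠ w := by
  intro he; subst he; unfold inE3 at h; omega

/- uniqueness of the partner -/
lemma inE1_uniq {v w w' : Fin n} (h : inE1 n v w) (h' : inE1 n v w') : w = w' := by
  apply Fin.ext; unfold inE1 at h h'; omega
lemma inE2_uniq {v w w' : Fin n} (h : inE2 n v w) (h' : inE2 n v w') : w = w' := by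
  apply Fin.ext; unfold inE2 at h h'; omega
lemma inE3_uniq (h5 : 5 ≤ n) {v w w' : Fin n} (h : inE3 n v w) (h' : inE3 n v w') : w = w' := by
  apply Fin.ext; have := w.isLt; have := w'.isLt; unfold inE3 at h h'; omega

/- exclusivity -/
lemma inE1_not_inE2 {v w : Fin n} (h : inE1 n v w) : ¬ inE2 n v w := by
  unfold inE1 at h; unfold inE2; omega
lemma inE1_not_inE3 (h5 : 5 ≤ n) {v w : Fin n} (h : inE1 n v w) : ¬ inE3 n v w := by
  have := v.isLt; have := w.isLt; unfold inE1 at h; unfold inE3; omega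
lemma inE2_not_inE3 (h5 : 5 ≤ n) (hodd : n % 2 = 1) {v w : Fin n} (h : inE2 n v w) :
    ¬ inE3 n v w := by
  have := v.isLt; have := w.isLt; unfold inE2 at h; unfold inE3; omega

lemma part_invol {e : Fin n → Fin n → Prop} (hsymm : ∀ v w, e v w → e w v)
    {m : Fin n → Fin n} (hm : Function.Involutive m) : Function.Involutive (part e m) := by
  intro v
  by_cases h : e v (m v)
  · rw [part_app h]
    have h' : e (m v) (m (m v)) := by rw [hm v]; exact hsymm _ _ h
    rw [part_app h', hm v]
  · rw [part_fix h, part_fix h]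

/- parts satisfy the Sub predicates -/
lemma P1_sub {m : Fin n → Fin n} (hm : Function.Involutive m) : SubE1 n (P1 n m) := by
  refine ⟨part_invol (fun _ _ => inE1_symm) hm, fun v => ?_⟩
  by_cases h : inE1 n v (m v)
  · rw [show P1 n m v = m v from part_app h]; right; exact h
  · left; exact part_fix h

lemma P2_sub {m : Fin n → Fin n} (hm : Function.Involutive m) : SubE2 n (P2 n m) := by
  refine ⟨part_invol (fun _ _ => inE2_symm) hm, fun v => ?_⟩
  by_cases h : inE2 n v (m v)
  · rw [show P2 n m v = m v from part_app h]; right; exact h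
  · left; exact part_fix h

lemma P3_sub {m : Fin n → Fin n} (hm : Function.Involutive m) : SubE3 n (P3 n m) := by
  refine ⟨part_invol (fun _ _ => inE3_symm) hm, fun v => ?_⟩
  by_cases h : inE3 n v (m v)
  · rw [show P3 n m v = m v from part_app h]; right; exact h
  · left; exact part_fix h

lemma Pf_sub {b : Bool} {m : Fin n → Fin n} (hm : Function.Involutive m) :
    SubF n b (Pf n b m) := by
  cases b
  · simpa [SubF, Pf] using P2_sub hm
  · simpa [SubF, Pf] using P1_sub hm

/- Sub predicates give matching perms of the cycle -/
lemma cycle_adj {v w : Fin n} (hne : v ≠ w)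
    (h : (v.val + 1) % n = w.val ∨ (w.val + 1) % n = v.val) : (cycleGraph n).Adj v w := by
  rw [cycleGraph, SimpleGraph.fromRel_adj]
  exact ⟨hne, h⟩

lemma subE1_matching (h5 : 5 ≤ n) {m : Fin n → Fin n} (h : SubE1 n m) :
    IsMatchingPerm (cycleGraph n) m := by
  refine ⟨h.1, fun v => ?_⟩
  rcases h.2 v with h0 | h1 | h2
  · left; exact h0
  · right
    refine cycle_adj (fun he => by rw [← he] at h1; omega) (Or.inl ?_)
    rw [h1.2]; exact Nat.mod_eq_of_lt (h1.2 ▸ (m v).isLt)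
  · right
    refine cycle_adj (fun he => by rw [← he] at h2; omega) (Or.inr ?_)
    rw [h2.2]; exact Nat.mod_eq_of_lt (h2.2 ▸ v.isLt)

lemma subE2_matching (h5 : 5 ≤ n) {m : Fin n → Fin n} (h : SubE2 n m) :
    IsMatchingPerm (cycleGraph n) m := by
  refine ⟨h.1, fun v => ?_⟩
  rcases h.2 v with h0 | h1 | h2
  · left; exact h0
  · right
    refine cycle_adj (fun he => by rw [← he] at h1; omega) (Or.inl ?_)
    rw [h1.2]; exact Nat.mod_eq_of_lt (h1.2 ▸ (m v).isLt)
  · right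
    refine cycle_adj (fun he => by rw [← he] at h2; omega) (Or.inr ?_)
    rw [h2.2]; exact Nat.mod_eq_of_lt (h2.2 ▸ v.isLt)

lemma subE3_matching (h5 : 5 ≤ n) {m : Fin n → Fin n} (h : SubE3 n m) :
    IsMatchingPerm (cycleGraph n) m := by
  refine ⟨h.1, fun v => ?_⟩
  rcases h.2 v with h0 | h1 | h2
  · left; exact h0
  · right
    refine cycle_adj (fun he => by rw [← he] at h1; omega) (Or.inl ?_)
    rw [h1.1, h1.2]
    have : n - 1 + 1 = n := by omega
    rw [this, Nat.mod_self]
  · right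
    refine cycle_adj (fun he => by rw [← he] at h2; omega) (Or.inr ?_)
    rw [h2.1, h2.2]
    have : n - 1 + 1 = n := by omega
    rw [this, Nat.mod_self]

lemma subF_matching (h5 : 5 ≤ n) {b : Bool} {m : Fin n → Fin n} (h : SubF n b m) :
    IsMatchingPerm (cycleGraph n) m := by
  cases b
  · exact subE2_matching h5 (by simpa [SubF] using h)
  · exact subE1_matching h5 (by simpa [SubF] using h)

/- classification of moves of a matching perm -/
lemma classify (h5 : 5 ≤ n) {m : Fin n → Fin n}
    (hm : IsMatchingPerm (cycleGraph n) m) (v : Fin n) :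
    m v = v ∨ inE1 n v (m v) ∨ inE2 n v (m v) ∨ inE3 n v (m v) := by
  rcases hm.2 v with h0 | hadj
  · left; exact h0
  · right
    rw [cycleGraph, SimpleGraph.fromRel_adj] at hadj
    obtain ⟨hne, hrel⟩ := hadj
    have hv := v.isLt
    have hw := (m v).isLt
    rcases hrel with h1 | h2
    · rcases Nat.lt_or_ge (v.val + 1) n with hlt | hge
      · rw [Nat.mod_eq_of_lt hlt] at h1
        rcases Nat.mod_two_eq_zero_or_one v.val with he | ho
        · left; unfold inE1; omega
        · right; left; unfold inE2; omega
      · have hvn : v.val = n - 1 := by omega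
        have : (v.val + 1) % n = 0 := by rw [show v.val + 1 = n by omega, Nat.mod_self]
        right; right; unfold inE3; omega
    · rcases Nat.lt_or_ge ((m v).val + 1) n with hlt | hge
      · rw [Nat.mod_eq_of_lt hlt] at h2
        rcases Nat.mod_two_eq_zero_or_one (m v).val with he | ho
        · left; unfold inE1; omega
        · right; left; unfold inE2; omega
      · have : ((m v).val + 1) % n = 0 := by rw [show (m v).val + 1 = n by omega, Nat.mod_self]
        right; right; unfold inE3; omega

/- decomposition of a matching perm into its three parts (both needed orders) -/
lemma decomp (h5 : 5 ≤ n) (hodd : n % 2 = 1) {m : Fin n → Fin n}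
    (hm : IsMatchingPerm (cycleGraph n) m) (v : Fin n) :
    P1 n m (P3 n m (P2 n m v)) = m v ∧ P2 n m (P3 n m (P1 n m v)) = m v := by
  have hinv := hm.1
  rcases classify h5 hm v with h0 | h1 | h2 | h3
  · have n1 : ¬ inE1 n v (m v) := fun h => inE1_ne h h0.symm
    have n2 : ¬ inE2 n v (m v) := fun h => inE2_ne h h0.symm
    have n3 : ¬ inE3 n v (m v) := fun h => inE3_ne h5 h h0.symm
    unfold P1 P2 P3
    constructor
    · rw [part_fix n2, part_fix n3, part_fix n1]; exact h0.symm
    · rw [part_fix n1, part_fix n3, part_fix n2]; exact h0.symm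
  · have n2 : ¬ inE2 n v (m v) := inE1_not_inE2 h1
    have n3 : ¬ inE3 n v (m v) := inE1_not_inE3 h5 h1
    have h1' : inE1 n (m v) (m (m v)) := by rw [hinv v]; exact inE1_symm h1
    have n2' : ¬ inE2 n (m v) (m (m v)) := inE1_not_inE2 h1'
    have n3' : ¬ inE3 n (m v) (m (m v)) := inE1_not_inE3 h5 h1'
    unfold P1 P2 P3
    constructor
    · rw [part_fix n2, part_fix n3, part_app h1]
    · rw [part_app h1, part_fix n3', part_fix n2']
  · have n1 : ¬ inE1 n v (m v) := fun h => inE1_not_inE2 h h2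
    have n3 : ¬ inE3 n v (m v) := inE2_not_inE3 h5 hodd h2
    have h2' : inE2 n (m v) (m (m v)) := by rw [hinv v]; exact inE2_symm h2
    have n1' : ¬ inE1 n (m v) (m (m v)) := fun h => inE1_not_inE2 h h2'
    have n3' : ¬ inE3 n (m v) (m (m v)) := inE2_not_inE3 h5 hodd h2'
    unfold P1 P2 P3
    constructor
    · rw [part_app h2, part_fix n3', part_fix n1']
    · rw [part_fix n1, part_fix n3, part_app h2]
  · have n1 : ¬ inE1 n v (m v) := fun h => inE1_not_inE3 h5 h h3
    have n2 : ¬ inE2 n v (m v) := fun h => inE2_not_inE3 h5 hodd h h3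
    have h3' : inE3 n (m v) (m (m v)) := by rw [hinv v]; exact inE3_symm h3
    have n1' : ¬ inE1 n (m v) (m (m v)) := fun h => inE1_not_inE3 h5 h h3'
    have n2' : ¬ inE2 n (m v) (m (m v)) := fun h => inE2_not_inE3 h5 hodd h h3'
    unfold P1 P2 P3
    constructor
    · rw [part_fix n2, part_app h3, part_fix n1']
    · rw [part_fix n1, part_app h3, part_fix n2']

lemma decompPf (h5 : 5 ≤ n) (hodd : n % 2 = 1) {m : Fin n → Fin n}
    (hm : IsMatchingPerm (cycleGraph n) m) (b : Bool) (v : Fin n) :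
    Pf n b m (P3 n m (Pf n (!b) m v)) = m v := by
  cases b
  · simpa [Pf] using (decomp h5 hodd hm v).2
  · simpa [Pf] using (decomp h5 hodd hm v).1

/- disjoint supports of parts of edge-disjoint consecutive matchings -/
lemma part_disj {e : Fin n → Fin n → Prop}
    (hne : ∀ v w : Fin n, e v w → v ≠ w)
    (huniq : ∀ v w w' : Fin n, e v w → e v w' → w = w')
    {m m' : Fin n → Fin n} (hd : ∀ v, m v = v ∨ m' v ≠ m v) (v : Fin n) :
    part e m v = v ∨ part e m' v = v := by
  by_cases h : e v (m v)
  · by_cases h' : e v (m' v)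
    · exfalso
      have heq : m v = m' v := huniq v _ _ h h'
      rcases hd v with h0 | h0
      · exact hne v (m v) h h0.symm
      · exact h0 heq.symm
    · right; exact part_fix h'
  · left; exact part_fix h

lemma Pf_disj (h5 : 5 ≤ n) {b : Bool} {m m' : Fin n → Fin n}
    (hd : ∀ v, m v = v ∨ m' v ≠ m v) (v : Fin n) :
    Pf n b m v = v ∨ Pf n b m' v = v := by
  cases b
  · exact part_disj (fun _ _ => inE2_ne) (fun _ _ _ => inE2_uniq) hd v
  · exact part_disj (fun _ _ => inE1_ne) (fun _ _ _ => inE1_uniq) hd v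

/- composition of two disjoint-support sub-matchings -/
lemma sub_comp_aux {Q : Fin n → Fin n → Prop} {f g : Fin n → Fin n}
    (hf : Function.Involutive f ∧ ∀ v, f v = v ∨ Q v (f v))
    (hg : Function.Involutive g ∧ ∀ v, g v = v ∨ Q v (g v))
    (hd : ∀ v, f v = v ∨ g v = v) :
    Function.Involutive (f ∘ g) ∧ ∀ v, (f ∘ g) v = v ∨ Q v ((f ∘ g) v) := by
  have key : ∀ v, g v ≠ v → (f ∘ g) v = g v := by
    intro v hgv
    have : f (g v) = g v := by
      rcases hd (g v) with h | h
      · exact h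
      · exfalso; rw [hg.1 v] at h; exact hgv h.symm
    simpa [Function.comp] using this
  have key2 : ∀ v, g v = v → (f ∘ g) v = f v := by
    intro v hgv; simp [Function.comp, hgv]
  constructor
  · intro v
    by_cases hgv : g v = v
    · rw [key2 v hgv]
      by_cases hfv : f v = v
      · rw [hfv, key2 v hgv, hfv]
      · have hg2 : g (f v) = f v := by
          rcases hd (f v) with h | h
          · exfalso; rw [hf.1 v] at h; exact hfv h.symm
          · exact h
        rw [key2 (f v) hg2, hf.1 v]
    · rw [key v hgv]
      have hgg : g (g v) = v := hg.1 v
      by_cases hgv2 : g (g v) = g v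
      · exfalso; rw [hgg] at hgv2; exact hgv hgv2.symm
      · rw [key (g v) hgv2, hgg]
  · intro v
    by_cases hgv : g v = v
    · rw [key2 v hgv]; exact hf.2 v
    · rw [key v hgv]; exact hg.2 v

lemma subF_comp {b : Bool} {f g : Fin n → Fin n}
    (hf : SubF n b f) (hg : SubF n b g) (hd : ∀ v, f v = v ∨ g v = v) :
    SubF n b (f ∘ g) := by
  cases b
  · simp only [SubF, if_neg Bool.false_ne_true] at *
    exact sub_comp_aux (Q := fun v w =>
      (v.val % 2 = 1 ∧ w.val = v.val + 1) ∨ (w.val % 2 = 1 ∧ v.val = w.val + 1)) hf hg hd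
  · simp only [SubF, if_pos rfl] at *
    exact sub_comp_aux (Q := fun v w =>
      (v.val % 2 = 0 ∧ w.val = v.val + 1) ∨ (w.val % 2 = 0 ∧ v.val = w.val + 1)) hf hg hd

/- the building blocks of the new sequence -/
noncomputable def mergeHead (x : Fin n → Fin n) : List (Fin n → Fin n) → List (Fin n → Fin n)
  | [] => [x]
  | y :: t => (x ∘ y) :: t

noncomputable def build (n : ℕ) : Bool → List (Fin n → Fin n) → List (Fin n → Fin n)
  | _, [] => []
  | b, m :: rest => Pf n b m :: P3 n m :: mergeHead (Pf n (!b) m) (build n (!b) rest)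

def Disj (f g : Fin n → Fin n) : Prop := ∀ v, f v = v ∨ g v ≠ f v

lemma build_spec (h5 : 5 ≤ n) (hodd : n % 2 = 1) :
    ∀ (ms : List (Fin n → Fin n)) (b : Bool),
    (∀ m ∈ ms, IsMatchingPerm (cycleGraph n) m) → List.Chain' Disj ms →
    (build n b ms).length ≤ 2 * ms.length + 1 ∧
    (build n b ms).foldr (· ∘ ·) id = ms.foldr (· ∘ ·) id ∧
    ∀ (j : ℕ) (hj : j < (build n b ms).length),
      (j % 4 = 0 → SubF n b ((build n b ms)[j])) ∧
      (j % 4 = 2 → SubF n (!b) ((build n b ms)[j])) ∧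
      (j % 2 = 1 → SubE3 n ((build n b ms)[j])) := by
  intro ms
  induction ms with
  | nil =>
    intro b _ _
    refine ⟨by simp [build], by simp [build], fun j hj => ?_⟩
    simp [build] at hj
  | cons m rest IH =>
    intro b hmem hchain
    have hm : IsMatchingPerm (cycleGraph n) m := hmem m List.mem_cons_self
    have hminv := hm.1
    cases rest with
    | nil =>
      have hB : build n b [m] = [Pf n b m, P3 n m, Pf n (!b) m] := rfl
      refine ⟨by simp [hB], ?_, ?_⟩
      · funext v
        simp only [hB, List.foldr_cons, List.foldr_nil, Function.comp, id]
        exact decompPf h5 hodd hm b v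
      · intro j hj
        simp only [hB, List.length_cons, List.length_nil] at hj
        interval_cases j
        · refine ⟨fun _ => ?_, fun h => by omega, fun h => by omega⟩
          exact Pf_sub hminv
        · refine ⟨fun h => by omega, fun h => by omega, fun _ => ?_⟩
          exact P3_sub hminv
        · refine ⟨fun h => by omega, fun _ => ?_, fun h => by omega⟩
          exact Pf_sub hminv
    | cons m' rest' =>
      have hchain' : List.Chain' Disj (m' :: rest') := (List.isChain_cons_cons.mp hchain).2
      have hdmm' : Disj m m' := (List.isChain_cons_cons.mp hchain).1
      have hmem' : ∀ x ∈ m' :: rest', IsMatchingPerm (cycleGraph n) x :=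
        fun x hx => hmem x (List.mem_cons_of_mem _ hx)
      have hm' : IsMatchingPerm (cycleGraph n) m' := hmem' m' List.mem_cons_self
      obtain ⟨IHlen, IHfold, IHcls⟩ := IH (!b) hmem' hchain'
      set D : List (Fin n → Fin n) :=
        P3 n m' :: mergeHead (Pf n (!(!b)) m') (build n (!(!b)) rest') with hD
      have hL : build n (!b) (m' :: rest') = Pf n (!b) m' :: D := rfl
      have hB : build n b (m :: m' :: rest') =
          Pf n b m :: P3 n m :: (Pf n (!b) m ∘ Pf n (!b) m') :: D := rfl
      have hlenL : (build n (!b) (m' :: rest')).length = 1 + D.length := by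
        rw [hL]; simp [Nat.add_comm]
      refine ⟨?_, ?_, ?_⟩
      · rw [hB]
        simp only [List.length_cons]
        rw [hlenL] at IHlen
        simp only [List.length_cons] at IHlen ⊢
        omega
      · -- foldr
        have hfoldL : Pf n (!b) m' ∘ D.foldr (· ∘ ·) id = m' ∘ rest'.foldr (· ∘ ·) id := by
          have := IHfold
          rw [hL] at this
          simpa using this
        funext v
        simp only [hB, List.foldr_cons, Function.comp]
        have step1 : Pf n (!b) m' (D.foldr (· ∘ ·) id v) = m' (rest'.foldr (· ∘ ·) id v) :=
          congrFun hfoldL v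
        rw [step1]
        exact decompPf h5 hodd hm b _
      · intro j hj
        have hjB : j < 3 + D.length := by
          rw [hB] at hj; simp only [List.length_cons] at hj; omega
        match j with
        | 0 => exact ⟨fun _ => Pf_sub hminv, fun h => by omega, fun h => by omega⟩
        | 1 => exact ⟨fun h => by omega, fun h => by omega, fun _ => P3_sub hminv⟩
        | 2 =>
          refine ⟨fun h => by omega, fun _ => ?_, fun h => by omega⟩
          have hval : (build n b (m :: m' :: rest'))[2]'hj = Pf n (!b) m ∘ Pf n (!b) m' := rfl
          rw [hval]
          exact subF_comp (Pf_sub hminv) (Pf_sub hm'.1) (Pf_disj h5 hdmm')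
        | (j' + 3) =>
          have hjD : j' < D.length := by omega
          have hj2 : j' + 1 < (build n (!b) (m' :: rest')).length := by rw [hlenL]; omega
          have hv1 : (build n b (m :: m' :: rest'))[j' + 3]'hj = D[j']'hjD := rfl
          have hv2 : (build n (!b) (m' :: rest'))[j' + 1]'hj2 = D[j']'hjD := rfl
          obtain ⟨c0, c2, c1⟩ := IHcls (j' + 1) hj2
          rw [hv1, ← hv2]
          refine ⟨fun h => ?_, fun h => ?_, fun h => ?_⟩
          · simpa [Bool.not_not] using c2 (by omega)
          · exact c0 (by omega)
          · exact c1 (by omega)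



end Stmt14Aux

/-- on the odd cycle of length `n = 2r+1 ≥ 5`, any solution `(M₁, …, M_k)`
in which consecutive matchings share no edge can be converted into an
`(E₁, E₃, E₂, E₃)`-alternating solution of length at most `2k + 1`: the matchings in
positions `4j+1` are subsets of `E₁`, those in positions `4j+3` are subsets of `E₂`, and
those in even positions are subsets of `E₃`. -/
theorem stmt_14 (n : ℕ) (hn : 5 ≤ n) (hodd : Odd n) (C : Fin n ≃ Fin n)
    (ms : List (Fin n → Fin n)) (hms : Solves (cycleGraph n) (⇑C) ms)
    (hdisj : ∀ (i : ℕ) (h : i + 1 < ms.length) (v : Fin n),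
      (ms[i]'(by omega)) v = v ∨ (ms[i + 1]'h) v ≠ (ms[i]'(by omega)) v) :
    ∃ ms' : List (Fin n → Fin n),
      ms'.length ≤ 2 * ms.length + 1 ∧
      Solves (cycleGraph n) (⇑C) ms' ∧
      ∀ j : Fin ms'.length,
        (j.val % 4 = 0 → SubE1 n (ms'.get j)) ∧
        (j.val % 4 = 2 → SubE2 n (ms'.get j)) ∧
        (j.val % 2 = 1 → SubE3 n (ms'.get j)) := by
  obtain ⟨hmall, hroute⟩ := hms
  have hodd' : n % 2 = 1 := Nat.odd_iff.mp hodd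
  have hchain : List.Chain' Disj ms := by
    refine List.isChain_iff_getElem.mpr ?_
    intro i h
    intro v
    simpa [List.get_eq_getElem] using hdisj i (by omega) v
  obtain ⟨hlen, hfold, hcls⟩ := build_spec hn hodd' ms true hmall hchain
  refine ⟨build n true ms, hlen, ⟨?_, ?_⟩, ?_⟩
  · intro m hm
    obtain ⟨i, hi, rfl⟩ := List.mem_iff_getElem.mp hm
    obtain ⟨c0, c2, c1⟩ := hcls i hi
    rcases Nat.mod_two_eq_zero_or_one i with h | h
    · have h4 : i % 4 = 0 ∨ i % 4 = 2 := by omega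
      rcases h4 with h4 | h4
      · exact subF_matching hn (c0 h4)
      · exact subF_matching hn (c2 h4)
    · exact subE3_matching hn (c1 h)
  · unfold routeSeq at hroute ⊢
    rw [hfold]
    exact hroute
  · intro j
    obtain ⟨c0, c2, c1⟩ := hcls j.val j.isLt
    refine ⟨fun h => ?_, fun h => ?_, fun h => ?_⟩
    · rw [List.get_eq_getElem]
      simpa [SubF] using c0 h
    · rw [List.get_eq_getElem]
      simpa [SubF] using c2 h
    · rw [List.get_eq_getElem]
      exact c1 h
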